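/- With τ the coalescent time of a random pair of tips in a Yule n-tree with rate 1, E[exp(-τ)] = (2/(n-1))(H_n - 1) - 1/(n+1), where H_n is the n-th harmonic number. -/

import Mathlib

open scoped BigOperators

/-- `b n x = ∏_{j=1}^n j/(j+x)`. -/
noncomputable def b (n : ℕ) (x : ℝ) : ℝ := ∏ j ∈ Finset.Icc 1 n, (j : ℝ) / (j + x)

/-- `π_{n,k} = 2(n+1)/((n-1)(k+1)(k+2))`. -/
noncomputable def piYule (n k : ℕ) : ℝ :=
  2 * ((n : ℝ) + 1) / (((n : ℝ) - 1) * ((k : ℝ) + 1) * ((k : ℝ) + 2))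

/-- The n-th harmonic number `H_n = Σ_{k=1}^n 1/k`. -/
noncomputable def harmonic' (n : ℕ) : ℝ := ∑ k ∈ Finset.Icc 1 n, (1 : ℝ) / k

lemma b_one (m : ℕ) : b m 1 = 1 / ((m : ℝ) + 1) := by
  induction m with
  | zero => simp [b]
  | succ m ih =>
    have h : b (m + 1) 1 = b m 1 * (((m : ℝ) + 1) / (((m : ℝ) + 1) + 1)) := by
      rw [b, b, Finset.prod_Icc_succ_top (Nat.le_add_left 1 m)]
      push_cast; ring
    rw [h, ih]
    have h1 : (m : ℝ) + 1 ≠ 0 := by positivity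
    have h2 : (m : ℝ) + 1 + 1 ≠ 0 := by positivity
    field_simp
    push_cast
    ring

lemma sum_aux (m : ℕ) :
    ∑ k ∈ Finset.Icc 1 m, (1 : ℝ) / ((k : ℝ) + 2) = harmonic' (m + 2) - 3 / 2 := by
  induction m with
  | zero => simp [harmonic', Finset.sum_Icc_succ_top, show (2:ℕ) = 1 + 1 from rfl]; norm_num
  | succ m ih =>
    rw [Finset.sum_Icc_succ_top (Nat.le_add_left 1 m), ih]
    have : harmonic' (m + 1 + 2) = harmonic' (m + 2) + 1 / ((m : ℝ) + 3) := by
      rw [harmonic', harmonic', Finset.sum_Icc_succ_top (by omega)]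
      push_cast; ring
    rw [this]; push_cast; ring

theorem stmt_5 (n : ℕ) (hn : 2 ≤ n) :
    ∑ k ∈ Finset.Icc 1 (n - 1), piYule n k * (b n 1 / b k 1) =
      (2 / ((n : ℝ) - 1)) * (harmonic' n - 1) - 1 / ((n : ℝ) + 1) := by
  obtain ⟨m, rfl⟩ : ∃ m, n = m + 2 := ⟨n - 2, by omega⟩
  have hn1 : ((m : ℝ) + 2) - 1 ≠ 0 := by nlinarith [Nat.cast_nonneg (α := ℝ) m]
  have hn2 : ((m : ℝ) + 2) + 1 ≠ 0 := by positivity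
  have hterm : ∀ k ∈ Finset.Icc 1 (m + 2 - 1),
      piYule (m + 2) k * (b (m + 2) 1 / b k 1) =
        (2 / (((m : ℝ) + 2) - 1)) * (1 / ((k : ℝ) + 2)) := by
    intro k _
    rw [piYule, b_one, b_one]
    have hk1 : (k : ℝ) + 1 ≠ 0 := by positivity
    have hk2 : (k : ℝ) + 2 ≠ 0 := by positivity
    have hn3 : ((m : ℝ) + 2 : ℝ) + 1 ≠ 0 := by positivity
    push_cast
    field_simp
  rw [Finset.sum_congr rfl hterm, ← Finset.mul_sum]
  have : m + 2 - 1 = m + 1 := by omega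
  rw [this, sum_aux (m + 1)]
  have hH : harmonic' (m + 1 + 2) = harmonic' (m + 2) + 1 / ((m : ℝ) + 3) := by
    rw [harmonic', harmonic', Finset.sum_Icc_succ_top (by omega)]
    push_cast; ring
  rw [hH]
  have h3 : (m : ℝ) + 3 ≠ 0 := by positivity
  push_cast
  field_simp
  ring
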